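/- arXiv:2510.22756 — 6 statements merged into one kernel-verified Lean document; each statement's English description precedes it below -/
import Mathlib

section
/- Let n ≥ 1 and let w : B₁ → ℝ be C² on the open unit ball B₁ ⊆ ℝⁿ. Suppose S ⊆ B₁ is a set which is discrete in its subspace topology (every point of S is isolated in S), and suppose that for every x ∈ B₁ \ S and every nonzero v ∈ ℝⁿ one has D²w(x)[v, v] < |v|², i.e. the largest eigenvalue of the Hessian of w is strictly less than 1 off S. Then the map x ↦ x − Dw(x) is injective on B₁; equivalently, the submanifold obtained by rotating the gradient graph {(x, Dw(x)) : x ∈ B₁} ⊆ ℝⁿ × ℝⁿ upward by the angle π/4, parametrized by x ↦ ((x − Dw(x))/√2, (x + Dw(x))/√2), is again a graph over the first ℝⁿ factor. -/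
open Metric Set MeasureTheory
open scoped RealInnerProductSpace

/-- If `w` is `C²` on the unit ball and its Hessian satisfies `D²w(x)[v,v] < |v|²` for all
nonzero `v`, away from a discrete set `S`, then `x ↦ x - Dw(x)` is injective on the ball;
i.e., the gradient graph of `w` rotated upward by `π/4` is again a graph. -/
theorem injOn_id_sub_gradient_of_hessian_lt_one
    (n : ℕ) (hn : 1 ≤ n)
    (w : EuclideanSpace ℝ (Fin n) → ℝ)
    (hw : ContDiffOn ℝ 2 w (Metric.ball 0 1))
    (S : Set (EuclideanSpace ℝ (Fin n)))
    (hS : S ⊆ Metric.ball 0 1) (hSdisc : DiscreteTopology S)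
    (hHess : ∀ x ∈ Metric.ball (0 : EuclideanSpace ℝ (Fin n)) 1 \ S,
      ∀ v : EuclideanSpace ℝ (Fin n), v ≠ 0 →
        iteratedFDeriv ℝ 2 w x ![v, v] < ‖v‖ ^ 2) :
    Set.InjOn (fun x => x - gradient w x) (Metric.ball 0 1) := by
  intro a ha b hb hab
  by_contra hne
  simp only at hab
  set v : EuclideanSpace ℝ (Fin n) := b - a with hv_def
  have hv : v ≠ 0 := sub_ne_zero.mpr (Ne.symm hne)
  set φ : ℝ → EuclideanSpace ℝ (Fin n) := fun t => a + t • v with hφ_def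
  have hφmem : ∀ t ∈ Icc (0:ℝ) 1, φ t ∈ Metric.ball (0 : EuclideanSpace ℝ (Fin n)) 1 :=
    fun t ht => (convex_ball (0 : EuclideanSpace ℝ (Fin n)) 1).add_smul_sub_mem ha hb ht
  set D2 : EuclideanSpace ℝ (Fin n) → ℝ := fun x => fderiv ℝ (fderiv ℝ w) x v v with hD2_def
  set g : ℝ → ℝ := fun t => t * ‖v‖ ^ 2 - fderiv ℝ w (φ t) v with hg_def
  have hφc : Continuous φ := by fun_prop
  -- derivative of `g`
  have hderiv : ∀ t ∈ Icc (0:ℝ) 1, HasDerivAt g (‖v‖ ^ 2 - D2 (φ t)) t := by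
    intro t ht
    have hx := hφmem t ht
    have hca : ContDiffAt ℝ 2 w (φ t) := hw.contDiffAt (isOpen_ball.mem_nhds hx)
    have hd1 : DifferentiableAt ℝ (fderiv ℝ w) (φ t) :=
      (hca.fderiv_right (m := 1) (by norm_num)).differentiableAt one_ne_zero
    have hφd : HasDerivAt φ v t := by
      exact (((hasDerivAt_id t).smul_const v).const_add a).congr_deriv (by simp)
    have h1 : HasDerivAt (fun s => fderiv ℝ w (φ s)) (fderiv ℝ (fderiv ℝ w) (φ t) v) t :=
      hd1.hasFDerivAt.comp_hasDerivAt t hφd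
    have h2 : HasDerivAt (fun s => fderiv ℝ w (φ s) v) (D2 (φ t)) t := by
      simpa using h1.clm_apply (hasDerivAt_const t v)
    exact (((hasDerivAt_id t).mul_const (‖v‖ ^ 2)).sub h2).congr_deriv (by simp)
  -- continuity of the derivative
  have hcontD2 : ContinuousOn (fun t => ‖v‖ ^ 2 - D2 (φ t)) (Icc (0:ℝ) 1) := by
    have hc2 : ContinuousOn (fderiv ℝ (fderiv ℝ w)) (Metric.ball (0 : EuclideanSpace ℝ (Fin n)) 1) :=
      (hw.fderiv_of_isOpen (m := 1) isOpen_ball (by norm_num)).continuousOn_fderiv_of_isOpen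
        isOpen_ball le_rfl
    have hcomp : ContinuousOn (fun t => fderiv ℝ (fderiv ℝ w) (φ t)) (Icc (0:ℝ) 1) :=
      hc2.comp hφc.continuousOn hφmem
    exact continuousOn_const.sub
      ((hcomp.clm_apply continuousOn_const).clm_apply continuousOn_const)
  have huIcc : uIcc (0:ℝ) 1 = Icc (0:ℝ) 1 := uIcc_of_le zero_le_one
  have hint : IntervalIntegrable (fun t => ‖v‖ ^ 2 - D2 (φ t)) volume 0 1 :=
    (huIcc ▸ hcontD2).intervalIntegrable
  -- fundamental theorem of calculus
  have hFTC : ∫ t in (0:ℝ)..1, (‖v‖ ^ 2 - D2 (φ t)) = g 1 - g 0 :=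
    intervalIntegral.integral_eq_sub_of_hasDerivAt (fun t ht => hderiv t (huIcc ▸ ht)) hint
  -- `g 1 - g 0 = 0`
  have hgrad : ∀ x : EuclideanSpace ℝ (Fin n), fderiv ℝ w x v = ⟪gradient w x, v⟫ := by
    intro x
    have h0 : gradient w x = (InnerProductSpace.toDual ℝ (EuclideanSpace ℝ (Fin n))).symm (fderiv ℝ w x) := rfl
    rw [h0, InnerProductSpace.toDual_symm_apply]
  have hgb : gradient w b - gradient w a = v := by
    have : a - gradient w a - (b - gradient w b) = 0 := by rw [hab]; abel
    have h2 : gradient w b - gradient w a - (b - a) = 0 := by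
      rw [← this]; abel
    exact sub_eq_zero.mp h2
  have hg10 : g 1 - g 0 = 0 := by
    have hφ1 : φ 1 = b := by simp [hφ_def, hv_def]
    have hφ0 : φ 0 = a := by simp [hφ_def]
    have : g 1 - g 0 = ‖v‖ ^ 2 - ⟪gradient w b - gradient w a, v⟫ := by
      simp only [hg_def, hφ1, hφ0, hgrad, inner_sub_left]
      ring
    rw [this, hgb, real_inner_self_eq_norm_sq, sub_self]
  -- measure-theoretic contradiction
  have hScount : S.Countable := (HereditarilyLindelof_LindelofSets S).countable hSdisc
  have hφinj : Function.Injective φ := by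
    intro s t h
    have : s • v = t • v := by
      have := h
      simp only [hφ_def, add_right_inj] at this
      exact this
    exact smul_left_injective ℝ hv this
  have hTnull : volume (φ ⁻¹' S) = 0 := (hScount.preimage hφinj).measure_zero _
  set μ := volume.restrict (Ioc (0:ℝ) 1) with hμ_def
  have hpos : ∀ᵐ t ∂μ, 0 < ‖v‖ ^ 2 - D2 (φ t) := by
    have h1 : ∀ᵐ t ∂μ, t ∉ φ ⁻¹' S :=
      ae_restrict_of_ae (measure_eq_zero_iff_ae_notMem.mp hTnull)
    have h2 : ∀ᵐ t ∂μ, t ∈ Ioc (0:ℝ) 1 := ae_restrict_mem measurableSet_Ioc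
    filter_upwards [h1, h2] with t hnS htI
    have hball : φ t ∈ Metric.ball (0 : EuclideanSpace ℝ (Fin n)) 1 := hφmem t (Ioc_subset_Icc_self htI)
    have hH := hHess (φ t) ⟨hball, hnS⟩ v hv
    rw [iteratedFDeriv_two_apply] at hH
    simp only [Matrix.cons_val_zero, Matrix.cons_val_one, Matrix.head_cons] at hH
    linarith
  have hInt : Integrable (fun t => ‖v‖ ^ 2 - D2 (φ t)) μ := hint.1
  have hzero : ∫ t, (‖v‖ ^ 2 - D2 (φ t)) ∂μ = 0 := by
    have h := hFTC
    rw [hg10, intervalIntegral.integral_of_le zero_le_one] at h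
    exact h
  have hnonneg : 0 ≤ᵐ[μ] fun t => ‖v‖ ^ 2 - D2 (φ t) :=
    hpos.mono fun t ht => ht.le
  have heq0 := (integral_eq_zero_iff_of_nonneg_ae hnonneg hInt).mp hzero
  have hμne : μ ≠ 0 := by
    intro h
    have : μ (Ioc (0:ℝ) 1) = 1 := by
      rw [hμ_def, Measure.restrict_apply measurableSet_Ioc]
      simp
    rw [h] at this
    simp at this
  have : (ae μ).NeBot := ae_neBot.mpr hμne
  obtain ⟨t, ht1, ht2⟩ := (hpos.and heq0).exists
  simp only [Pi.zero_apply] at ht2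
  linarith
end

section
/- Let n ≥ 1 and let w : B₁ → ℝ be C² on the open unit ball B₁ ⊆ ℝⁿ. Suppose S ⊆ B₁ is a set which is discrete in its subspace topology, and suppose that for every x ∈ B₁ \ S and every nonzero v ∈ ℝⁿ one has D²w(x)[v, v] < |v|². Then for all distinct points x, y ∈ B₁, ⟨Dw(x) − Dw(y), x − y⟩ < |x − y|². -/
open Metric Set Topology Filter
open scoped RealInnerProductSpace

/-- If `w` is `C²` on the unit ball and its Hessian satisfies `D²w(x)[v,v] < |v|²` for all
nonzero `v`, away from a discrete set `S`, then for all distinct points `x, y` of the ball,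
`⟨Dw(x) - Dw(y), x - y⟩ < |x - y|²`. -/
theorem gradient_monotonicity_of_hessian_lt_one
    (n : ℕ) (hn : 1 ≤ n)
    (w : EuclideanSpace ℝ (Fin n) → ℝ)
    (hw : ContDiffOn ℝ 2 w (Metric.ball 0 1))
    (S : Set (EuclideanSpace ℝ (Fin n)))
    (hS : S ⊆ Metric.ball 0 1) (hSdisc : DiscreteTopology S)
    (hHess : ∀ x ∈ Metric.ball (0 : EuclideanSpace ℝ (Fin n)) 1 \ S,
      ∀ v : EuclideanSpace ℝ (Fin n), v ≠ 0 →
        iteratedFDeriv ℝ 2 w x ![v, v] < ‖v‖ ^ 2) :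
    ∀ x ∈ Metric.ball (0 : EuclideanSpace ℝ (Fin n)) 1,
      ∀ y ∈ Metric.ball (0 : EuclideanSpace ℝ (Fin n)) 1, x ≠ y →
        ⟪gradient w x - gradient w y, x - y⟫ < ‖x - y‖ ^ 2 := by
  intro x hx y hy hxy
  set v : EuclideanSpace ℝ (Fin n) := x - y with hv
  have hv0 : v ≠ 0 := sub_ne_zero.mpr hxy
  haveI : Nontrivial (EuclideanSpace ℝ (Fin n)) := ⟨⟨x, y, hxy⟩⟩
  set B := Metric.ball (0 : EuclideanSpace ℝ (Fin n)) 1 with hB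
  set z : ℝ → EuclideanSpace ℝ (Fin n) := fun t => y + t • v with hz
  have hzc : Continuous z := by fun_prop
  have hz1 : z 1 = x := by simp [hz, hv]
  have hz0 : z 0 = y := by simp [hz]
  have hzmem : ∀ t ∈ Icc (0:ℝ) 1, z t ∈ B := by
    intro t ht
    exact (convex_ball (0: EuclideanSpace ℝ (Fin n)) 1).add_smul_sub_mem hy hx ht
  have hca : ∀ a ∈ B, ContDiffAt ℝ 2 w a := fun a ha =>
    hw.contDiffAt (isOpen_ball.mem_nhds ha)
  set f1 := fderiv ℝ w with hf1def
  set f2 := fderiv ℝ f1 with hf2def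
  have hf1 : ∀ a ∈ B, HasFDerivAt f1 (f2 a) a := by
    intro a ha
    have h1 : ContDiffAt ℝ 1 f1 a := (hca a ha).fderiv_right (by norm_num)
    exact (h1.differentiableAt one_ne_zero).hasFDerivAt
  have hf2cont : ContinuousOn f2 B := by
    intro a ha
    have h1 : ContDiffAt ℝ 1 f1 a := (hca a ha).fderiv_right (by norm_num)
    have h0 : ContDiffAt ℝ 0 f2 a := h1.fderiv_right (by norm_num)
    exact h0.continuousAt.continuousWithinAt
  have hHess' : ∀ a ∈ B \ S, f2 a v v < ‖v‖ ^ 2 := by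
    intro a ha
    have := hHess a ha v hv0
    rwa [iteratedFDeriv_two_apply, show (![v,v]) 0 = v from rfl,
      show (![v,v]) 1 = v from rfl] at this
  -- continuity of b ↦ f2 b v v
  have hevalc : Continuous fun (L : EuclideanSpace ℝ (Fin n) →L[ℝ] (EuclideanSpace ℝ (Fin n) →L[ℝ] ℝ)) => L v v :=
    (ContinuousLinearMap.apply ℝ ℝ v).continuous.comp
      ((ContinuousLinearMap.apply ℝ (EuclideanSpace ℝ (Fin n) →L[ℝ] ℝ) v).continuous)
  have key : ∀ a ∈ B, f2 a v v ≤ ‖v‖ ^ 2 := by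
    intro a ha
    by_cases haS : a ∈ S
    · have hopen : IsOpen {(⟨a, haS⟩ : S)} := isOpen_discrete _
      rw [isOpen_induced_iff] at hopen
      obtain ⟨U, hUo, hUeq⟩ := hopen
      have haU : a ∈ U := by
        have : (⟨a, haS⟩ : S) ∈ (Subtype.val ⁻¹' U : Set S) := by rw [hUeq]; rfl
        exact this
      have hsub : (B ∩ U) \ {a} ⊆ B \ S := by
        rintro b ⟨⟨hbB, hbU⟩, hba⟩
        refine ⟨hbB, fun hbS => hba ?_⟩
        have : (⟨b, hbS⟩ : S) ∈ (Subtype.val ⁻¹' U : Set S) := hbU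
        rw [hUeq] at this
        simpa using congrArg Subtype.val this
      have hnb : (𝓝[B \ S] a).NeBot := by
        have h1 : (𝓝[≠] a).NeBot := Module.punctured_nhds_neBot ℝ (EuclideanSpace ℝ (Fin n)) a
        have hmem : B ∩ U ∈ nhds a := (isOpen_ball.inter hUo).mem_nhds ⟨ha, haU⟩
        have heq : 𝓝[(B ∩ U) \ {a}] a = 𝓝[≠] a := by
          rw [diff_eq, inter_comm]
          exact nhdsWithin_inter_of_mem' (mem_nhdsWithin_of_mem_nhds hmem)
        have : (𝓝[(B ∩ U) \ {a}] a).NeBot := by rw [heq]; exact h1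
        exact this.mono (nhdsWithin_mono a hsub)
      have hcont : Filter.Tendsto (fun b => f2 b v v) (𝓝[B \ S] a) (nhds (f2 a v v)) :=
        (hevalc.continuousAt.comp_continuousWithinAt
          ((hf2cont a ha).mono diff_subset)).tendsto
      refine le_of_tendsto hcont ?_
      filter_upwards [self_mem_nhdsWithin] with b hb
      exact (hHess' b hb).le
    · exact (hHess' a ⟨ha, haS⟩).le
  -- derivative of φ
  set φ : ℝ → ℝ := fun t => f1 (z t) v with hφ
  have hzd : ∀ t : ℝ, HasDerivAt z v t := by
    intro t
    have : HasDerivAt (fun t : ℝ => t • v) ((1:ℝ) • v) t := (hasDerivAt_id t).smul_const v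
    simpa only [one_smul] using this.const_add y
  have hφ' : ∀ t ∈ Icc (0:ℝ) 1, HasDerivAt φ (f2 (z t) v v) t := by
    intro t ht
    have h1 : HasDerivAt (fun s => f1 (z s)) (f2 (z t) v) t :=
      (hf1 _ (hzmem t ht)).comp_hasDerivAt t (hzd t)
    exact (ContinuousLinearMap.apply ℝ ℝ v).hasFDerivAt.comp_hasDerivAt t h1
  have hder_cont : ContinuousOn (fun t => f2 (z t) v v) (Icc (0:ℝ) 1) :=
    hevalc.comp_continuousOn (hf2cont.comp hzc.continuousOn hzmem)
  have hFTC : φ 1 - φ 0 = ∫ t in (0:ℝ)..1, f2 (z t) v v := by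
    symm
    apply intervalIntegral.integral_eq_sub_of_hasDerivAt
    · intro t ht
      exact hφ' t (by rwa [uIcc_of_le zero_le_one] at ht)
    · apply ContinuousOn.intervalIntegrable
      rwa [uIcc_of_le zero_le_one]
  have hex : ∃ t₀ ∈ Icc (0:ℝ) 1, z t₀ ∉ S := by
    by_contra h
    push_neg at h
    have hc : z 0 = z 1 :=
      isPreconnected_Icc.constant_of_mapsTo (isDiscrete_iff_discreteTopology.mpr hSdisc) hzc.continuousOn h
        (left_mem_Icc.mpr zero_le_one) (right_mem_Icc.mpr zero_le_one)
    rw [hz0, hz1] at hc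
    exact hxy hc.symm
  have hint : (∫ t in (0:ℝ)..1, f2 (z t) v v) < ‖v‖ ^ 2 := by
    have : (∫ t in (0:ℝ)..1, f2 (z t) v v) < ∫ _ in (0:ℝ)..1, ‖v‖ ^ 2 := by
      apply intervalIntegral.integral_lt_integral_of_continuousOn_of_le_of_exists_lt zero_lt_one
        hder_cont continuousOn_const
      · intro t ht
        exact key _ (hzmem t (Ioc_subset_Icc_self ht))
      · obtain ⟨t₀, ht₀, hnS⟩ := hex
        exact ⟨t₀, ht₀, hHess' _ ⟨hzmem t₀ ht₀, hnS⟩⟩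
    simpa using this
  have hmain : φ 1 - φ 0 < ‖v‖ ^ 2 := hFTC ▸ hint
  have hgx : ⟪gradient w x, v⟫ = f1 x v := InnerProductSpace.toDual_symm_apply
  have hgy : ⟪gradient w y, v⟫ = f1 y v := InnerProductSpace.toDual_symm_apply
  calc ⟪gradient w x - gradient w y, v⟫
      = ⟪gradient w x, v⟫ - ⟪gradient w y, v⟫ := inner_sub_left _ _ _
    _ = φ 1 - φ 0 := by rw [hgx, hgy]; simp only [hφ, hz1, hz0]
    _ < ‖v‖ ^ 2 := hmain
end

section
/- Let n ≥ 2 be an integer and let q > 0 and k > 0 be real numbers. The double integral ∫₀¹ ∫₀¹ r^{n−2} / (r^{2k} + s²)^{q} dr ds is finite if and only if q < 1/2 + (n−1)/(2k). -/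
section Aux
open Set MeasureTheory Real

lemma restrict_sq :
    (volume : Measure (ℝ × ℝ)).restrict (Ioo (0:ℝ) 1 ×ˢ Ioo (0:ℝ) 1)
      = (volume.restrict (Ioo (0:ℝ) 1)).prod (volume.restrict (Ioo (0:ℝ) 1)) := by
  rw [Measure.volume_eq_prod, Measure.prod_restrict]

lemma prod_rpow_integrable {a b : ℝ} (ha : -1 < a) (hb : -1 < b) :
    IntegrableOn (fun p : ℝ × ℝ => p.1 ^ a * p.2 ^ b)
      (Ioo (0:ℝ) 1 ×ˢ Ioo (0:ℝ) 1) := by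
  rw [IntegrableOn, restrict_sq]
  exact ((intervalIntegral.integrableOn_Ioo_rpow_iff one_pos).2 ha).mul_prod
    ((intervalIntegral.integrableOn_Ioo_rpow_iff one_pos).2 hb)

lemma exists_theta {A B : ℝ} (hA1 : A < 1) (hB : 0 < B) (hAB : A < B) :
    ∃ θ : ℝ, 0 ≤ θ ∧ θ ≤ 1 ∧ A < θ ∧ θ < B := by
  have hm : A < min B 1 := lt_min hAB hA1
  have h1 : A < (A + min B 1)/2 := by linarith
  have h2 : (A + min B 1)/2 < min B 1 := by linarith
  refine ⟨max 0 ((A + min B 1)/2), le_max_left _ _,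
    max_le zero_le_one (le_of_lt (lt_of_lt_of_le h2 (min_le_right B 1))),
    lt_of_lt_of_le h1 (le_max_right _ _),
    max_lt hB (lt_of_lt_of_le h2 (min_le_left B 1))⟩

private theorem fwd (n : ℕ) (hn : 2 ≤ n) (q k : ℝ) (hq : 0 < q) (hk : 0 < k)
    (h : q < 1 / 2 + ((n : ℝ) - 1) / (2 * k)) :
    IntegrableOn (fun p : ℝ × ℝ => p.1 ^ (n - 2) / (p.1 ^ (2 * k) + p.2 ^ 2) ^ q)
      (Ioo (0:ℝ) 1 ×ˢ Ioo (0:ℝ) 1) := by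
  have hn1 : (1:ℝ) ≤ (n:ℝ) - 1 := by
    have : (2:ℝ) ≤ n := by exact_mod_cast hn
    linarith
  have hA1 : 1 - 1 / (2 * q) < 1 := by
    have : 0 < 1 / (2 * q) := by positivity
    linarith
  have hBpos : 0 < ((n:ℝ) - 1) / (2 * k * q) := div_pos (by linarith) (by positivity)
  have hAB : 1 - 1 / (2 * q) < ((n:ℝ) - 1) / (2 * k * q) := by
    have h1 : ((n:ℝ)-1)/(2*k) * (2*k) = (n:ℝ)-1 := div_mul_cancel₀ _ (by positivity)
    have h' : 2*k*q < k + ((n:ℝ)-1) := by nlinarith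
    rw [lt_div_iff₀ (by positivity : (0:ℝ) < 2*k*q)]
    have h2 : 1/(2*q)*(2*q) = 1 := by field_simp
    nlinarith
  obtain ⟨θ, hθ0, hθ1, hθA, hθB⟩ := exists_theta hA1 hBpos hAB
  have ha : -1 < (n:ℝ) - 2 - 2*k*q*θ := by
    have := (lt_div_iff₀ (by positivity : (0:ℝ) < 2*k*q)).1 hθB
    nlinarith
  have hb : -1 < -(2*q*(1-θ)) := by
    have h1 : 1 - θ < 1/(2*q) := by linarith
    have := (lt_div_iff₀ (by positivity : (0:ℝ) < 2*q)).1 h1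
    nlinarith
  have hg := prod_rpow_integrable ha hb
  refine hg.mono' ?_ ?_
  · exact ((by fun_prop : Measurable (fun p : ℝ × ℝ =>
      p.1 ^ (n - 2) / (p.1 ^ (2 * k) + p.2 ^ 2) ^ q)).aestronglyMeasurable).restrict
  · refine (ae_restrict_iff' (measurableSet_Ioo.prod measurableSet_Ioo)).2 (ae_of_all _ ?_)
    rintro ⟨r, s⟩ ⟨hr, hs⟩
    dsimp only
    obtain ⟨hr0, hr1⟩ := hr
    obtain ⟨hs0, hs1⟩ := hs
    have hD : 0 < r ^ (2*k) + s ^ 2 := by positivity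
    have hP : 0 < (r^(2*k))^θ * (s^2)^(1-θ) := by positivity
    have h1 : (r^(2*k))^θ * (s^2)^(1-θ) ≤ r^(2*k) + s^2 := by
      have := Real.geom_mean_le_arith_mean2_weighted (w₁ := θ) (w₂ := 1-θ)
        (p₁ := r^(2*k)) (p₂ := s^2) hθ0 (by linarith) (rpow_nonneg hr0.le (2*k))
        (sq_nonneg s) (by ring)
      nlinarith [rpow_nonneg hr0.le (2*k), sq_nonneg s]
    have h3 : ((r^(2*k))^θ * (s^2)^(1-θ))^q ≤ (r^(2*k)+s^2)^q := rpow_le_rpow hP.le h1 hq.le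
    have hPq : ((r^(2*k))^θ * (s^2)^(1-θ))^q = r ^ (2*k*q*θ) * s ^ (2*q*(1-θ)) := by
      rw [← Real.rpow_natCast s 2, ← Real.rpow_mul hr0.le, ← Real.rpow_mul hs0.le,
        Real.mul_rpow (rpow_nonneg hr0.le _) (rpow_nonneg hs0.le _),
        ← Real.rpow_mul hr0.le, ← Real.rpow_mul hs0.le]
      push_cast
      congr 1 <;> congr 1 <;> ring
    have hnum : r ^ (n - 2) = r ^ ((n:ℝ) - 2) := by
      rw [← Real.rpow_natCast r (n-2), Nat.cast_sub hn]
      norm_num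
    have hfg : r ^ (n-2) / (r^(2*k)+s^2)^q ≤ r ^ (n-2) / ((r^(2*k))^θ * (s^2)^(1-θ))^q :=
      div_le_div_of_nonneg_left (by positivity) (by positivity) h3
    have hEq : r ^ ((n:ℝ) - 2 - 2*k*q*θ) * s ^ (-(2*q*(1-θ)))
        = r ^ ((n:ℝ) - 2) / (r ^ (2*k*q*θ) * s ^ (2*q*(1-θ))) := by
      rw [Real.rpow_sub hr0, Real.rpow_neg hs0.le, div_mul_eq_div_div, div_eq_mul_inv, div_eq_mul_inv]
    rw [Real.norm_of_nonneg (by positivity)]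
    calc r ^ (n-2) / (r^(2*k)+s^2)^q
        ≤ r ^ (n-2) / ((r^(2*k))^θ * (s^2)^(1-θ))^q := hfg
      _ = r ^ ((n:ℝ)-2) / (r ^ (2*k*q*θ) * s ^ (2*q*(1-θ))) := by rw [hPq, hnum]
      _ = r ^ ((n:ℝ) - 2 - 2*k*q*θ) * s ^ (-(2*q*(1-θ))) := hEq.symm

private theorem bwd (n : ℕ) (hn : 2 ≤ n) (q k : ℝ) (hq : 0 < q) (hk : 0 < k)
    (H : IntegrableOn (fun p : ℝ × ℝ => p.1 ^ (n - 2) / (p.1 ^ (2 * k) + p.2 ^ 2) ^ q)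
      (Ioo (0:ℝ) 1 ×ˢ Ioo (0:ℝ) 1)) :
    q < 1 / 2 + ((n : ℝ) - 1) / (2 * k) := by
  by_contra hge
  push_neg at hge
  have hn1 : (1:ℝ) ≤ (n:ℝ) - 1 := by
    have : (2:ℝ) ≤ n := by exact_mod_cast hn
    linarith
  have hc : 0 < (2:ℝ) ^ (-q) := rpow_pos_of_pos two_pos _
  set E : Set (ℝ × ℝ) := {p : ℝ × ℝ | 0 < p.2 ∧ p.2 < p.1 ^ k} with hE
  have hEm : MeasurableSet E := by
    have h1 : MeasurableSet {p : ℝ × ℝ | 0 < p.2} :=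
      measurableSet_lt measurable_const measurable_snd
    have h2 : MeasurableSet {p : ℝ × ℝ | p.2 < p.1 ^ k} :=
      measurableSet_lt measurable_snd (by fun_prop)
    exact h1.inter h2
  set g : ℝ × ℝ → ℝ :=
    fun p => E.indicator (fun p : ℝ × ℝ => (2:ℝ) ^ (-q) * p.1 ^ ((n:ℝ) - 2 - 2*k*q)) p with hg
  have hgm : Measurable g := Measurable.indicator (by fun_prop) hEm
  have hsq : MeasurableSet (Ioo (0:ℝ) 1 ×ˢ Ioo (0:ℝ) 1) :=
    measurableSet_Ioo.prod measurableSet_Ioo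
  have hnum : ∀ r : ℝ, 0 < r → r ^ (n - 2) = r ^ ((n:ℝ) - 2) := by
    intro r hr
    rw [← Real.rpow_natCast r (n-2), Nat.cast_sub hn]
    norm_num
  have hgi : IntegrableOn g (Ioo (0:ℝ) 1 ×ˢ Ioo (0:ℝ) 1) := by
    refine H.mono' hgm.aestronglyMeasurable.restrict ?_
    refine (ae_restrict_iff' hsq).2 (ae_of_all _ ?_)
    rintro ⟨r, s⟩ ⟨⟨hr0, hr1⟩, ⟨hs0, hs1⟩⟩
    simp only [hg]
    by_cases hEp : ((r, s) : ℝ × ℝ) ∈ E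
    · rw [Set.indicator_of_mem hEp]
      obtain ⟨-, hs2⟩ := hEp
      have hrk : 0 < r ^ k := rpow_pos_of_pos hr0 k
      have hs2' : s ^ 2 < r ^ (2*k) := by
        have h1 : s ^ 2 < (r ^ k) ^ 2 := by nlinarith
        have h2 : (r ^ k) ^ 2 = r ^ (2*k) := by
          rw [← Real.rpow_natCast (r ^ k) 2, ← Real.rpow_mul hr0.le]
          norm_num [mul_comm]
        linarith
      have hD : 0 < r ^ (2*k) + s ^ 2 := by positivity
      have hD2 : r ^ (2*k) + s ^ 2 ≤ 2 * r ^ (2*k) := by nlinarith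
      have h2 : (r ^ (2*k) + s ^ 2) ^ q ≤ (2 * r ^ (2*k)) ^ q :=
        rpow_le_rpow hD.le hD2 hq.le
      have h3 : (2 * r ^ (2*k)) ^ q = 2 ^ q * r ^ (2*k*q) := by
        rw [Real.mul_rpow (by norm_num) (rpow_nonneg hr0.le _), ← Real.rpow_mul hr0.le]
      rw [Real.norm_of_nonneg (by positivity)]
      have step : (2:ℝ) ^ (-q) * r ^ ((n:ℝ) - 2 - 2*k*q)
          = r ^ ((n:ℝ) - 2) / (2 ^ q * r ^ (2*k*q)) := by
        rw [Real.rpow_neg (by norm_num : (0:ℝ) ≤ 2), Real.rpow_sub hr0]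
        ring
      rw [step, hnum r hr0]
      exact div_le_div_of_nonneg_left (by positivity) (by positivity) (h3 ▸ h2)
    · rw [Set.indicator_of_notMem hEp, norm_zero]
      positivity
  have hg0 : ∀ p ∈ (Ioo (0:ℝ) 1 ×ˢ Ioo (0:ℝ) 1), 0 ≤ g p := by
    rintro ⟨r, s⟩ ⟨⟨hr0, hr1⟩, -⟩
    simp only [hg]
    by_cases hEp : ((r, s) : ℝ × ℝ) ∈ E
    · rw [Set.indicator_of_mem hEp]; positivity
    · rw [Set.indicator_of_notMem hEp]
  have hne : (∫⁻ p, ENNReal.ofReal (g p)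
      ∂((volume.restrict (Ioo (0:ℝ) 1)).prod (volume.restrict (Ioo (0:ℝ) 1)))) ≠ ⊤ := by
    rw [← restrict_sq]
    refine (lintegral_ofReal_ne_top_iff_integrable hgm.aestronglyMeasurable.restrict
      ?_).2 hgi
    exact (ae_restrict_iff' hsq).2 (ae_of_all _ hg0)
  have hT := MeasureTheory.lintegral_prod (μ := volume.restrict (Ioo (0:ℝ) 1))
    (ν := volume.restrict (Ioo (0:ℝ) 1)) (fun p : ℝ × ℝ => ENNReal.ofReal (g p))
    ((ENNReal.measurable_ofReal.comp hgm).aemeasurable)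
  rw [hT] at hne
  have inner : ∀ r ∈ Ioo (0:ℝ) 1,
      (∫⁻ s in Ioo (0:ℝ) 1, ENNReal.ofReal (g (r, s)))
        = ENNReal.ofReal ((2:ℝ) ^ (-q) * r ^ ((n:ℝ) - 2 - 2*k*q + k)) := by
    rintro r ⟨hr0, hr1⟩
    have hrk0 : 0 < r ^ k := rpow_pos_of_pos hr0 k
    have hrk1 : r ^ k < 1 := Real.rpow_lt_one hr0.le hr1 hk
    have hgr : ∀ s : ℝ, ENNReal.ofReal (g (r, s))
        = (Ioo (0:ℝ) (r ^ k)).indicator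
            (fun _ => ENNReal.ofReal ((2:ℝ) ^ (-q) * r ^ ((n:ℝ) - 2 - 2*k*q))) s := by
      intro s
      simp only [hg]
      by_cases hsE : ((r, s) : ℝ × ℝ) ∈ E
      · rw [Set.indicator_of_mem hsE,
          Set.indicator_of_mem (show s ∈ Ioo (0:ℝ) (r ^ k) from ⟨hsE.1, hsE.2⟩)]
      · rw [Set.indicator_of_notMem hsE,
          Set.indicator_of_notMem (fun hs => hsE ⟨hs.1, hs.2⟩), ENNReal.ofReal_zero]
    rw [lintegral_congr hgr, lintegral_indicator measurableSet_Ioo,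
      setLIntegral_const, Measure.restrict_apply measurableSet_Ioo,
      Set.inter_eq_left.2 (Ioo_subset_Ioo le_rfl hrk1.le), Real.volume_Ioo,
      ← ENNReal.ofReal_mul (by positivity)]
    congr 1
    rw [Real.rpow_add hr0]
    ring
  rw [setLIntegral_congr_fun measurableSet_Ioo inner] at hne
  have hint : IntegrableOn (fun r : ℝ => (2:ℝ) ^ (-q) * r ^ ((n:ℝ) - 2 - 2*k*q + k))
      (Ioo (0:ℝ) 1) := by
    rw [IntegrableOn]
    refine (lintegral_ofReal_ne_top_iff_integrable
      ((by fun_prop : Measurable (fun r : ℝ =>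
        (2:ℝ) ^ (-q) * r ^ ((n:ℝ) - 2 - 2*k*q + k))).aestronglyMeasurable).restrict
      ?_).1 hne
    refine (ae_restrict_iff' measurableSet_Ioo).2 (ae_of_all _ ?_)
    rintro r ⟨hr0, -⟩
    positivity
  have h5 : IntegrableOn (fun r : ℝ => r ^ ((n:ℝ) - 2 - 2*k*q + k)) (Ioo (0:ℝ) 1) := by
    have h6 := hint.const_mul (((2:ℝ) ^ (-q))⁻¹)
    simpa [IntegrableOn, ← mul_assoc, inv_mul_cancel₀ hc.ne'] using h6
  have h7 : -1 < (n:ℝ) - 2 - 2*k*q + k :=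
    (intervalIntegral.integrableOn_Ioo_rpow_iff one_pos).1 h5
  have hdiv : ((n:ℝ) - 1) / (2*k) * (2*k) = (n:ℝ) - 1 := div_mul_cancel₀ _ (by positivity)
  nlinarith

end Aux

open Metric Set MeasureTheory

/-- The double integral `∫₀¹∫₀¹ r^{n-2}/(r^{2k} + s²)^q dr ds` is finite if and only if
`q < 1/2 + (n-1)/(2k)`. -/
theorem integrable_model_integral_iff
    (n : ℕ) (hn : 2 ≤ n) (q k : ℝ) (hq : 0 < q) (hk : 0 < k) :
    MeasureTheory.IntegrableOn
        (fun p : ℝ × ℝ => p.1 ^ (n - 2) / (p.1 ^ (2 * k) + p.2 ^ 2) ^ q)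
        (Set.Ioo (0 : ℝ) 1 ×ˢ Set.Ioo (0 : ℝ) 1) ↔
      q < 1 / 2 + ((n : ℝ) - 1) / (2 * k) :=
  ⟨bwd n hn q k hq hk, fwd n hn q k hq hk⟩
end

section
/- Let n ≥ 1, let Ω ⊆ ℝⁿ be open, let u : Ω → ℝ be C² on Ω, and let γ ∈ ℝ. Define ū : Ω → ℝ by ū(x) = u(x) − sin γ cos γ · (|Du(x)|² − |x|²)/2 − sin²γ · ⟨x, Du(x)⟩. Then ū is differentiable on Ω and for every x ∈ Ω its gradient is given by Dū(x) = (cos γ · Iₙ − sin γ · D²u(x)) (sin γ · x + cos γ · Du(x)), where D²u(x) is the Hessian of u at x acting as a symmetric linear map on ℝⁿ and Iₙ is the identity. Equivalently, the 1-form Σᵢ ȳᵢ dx̄ᵢ pulled back to Ω via x̄(x) = cos γ · x − sin γ · Du(x), ȳ(x) = sin γ · x + cos γ · Du(x) equals dū. -/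
open Metric Set Real
open scoped RealInnerProductSpace

/-- For `u` of class `C²` on an open set `Ω ⊆ ℝⁿ` and an angle `γ`, the function
`ū(x) = u(x) - sin γ cos γ (|Du(x)|² - |x|²)/2 - sin²γ ⟨x, Du(x)⟩`
has gradient `Dū(x) = (cos γ Iₙ - sin γ D²u(x))(sin γ x + cos γ Du(x))` at every `x ∈ Ω`;
i.e. the 1-form `Σ ȳᵢ dx̄ᵢ` of the rotated coordinates pulls back to `dū`. -/
theorem rotated_potential_gradient
    (n : ℕ) (hn : 1 ≤ n)
    (Ω : Set (EuclideanSpace ℝ (Fin n))) (hΩ : IsOpen Ω)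
    (u : EuclideanSpace ℝ (Fin n) → ℝ) (hu : ContDiffOn ℝ 2 u Ω) (γ : ℝ) :
    ∀ x ∈ Ω,
      HasGradientAt
        (fun z => u z - Real.sin γ * Real.cos γ * ((‖gradient u z‖ ^ 2 - ‖z‖ ^ 2) / 2)
          - Real.sin γ ^ 2 * ⟪z, gradient u z⟫)
        (Real.cos γ • (Real.sin γ • x + Real.cos γ • gradient u x)
          - Real.sin γ • fderiv ℝ (gradient u) x (Real.sin γ • x + Real.cos γ • gradient u x))
        x := by
  intro x hx
  have hx2 : ContDiffAt ℝ 2 u x := hu.contDiffAt (hΩ.mem_nhds hx)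
  -- differentiability of u at x
  have hA : HasFDerivAt u (fderiv ℝ u x) x :=
    (hx2.differentiableAt two_ne_zero).hasFDerivAt
  -- the gradient map
  have hd1 : ContDiffAt ℝ 1 (fderiv ℝ u) x := hx2.fderiv_right (by norm_num)
  have hB' : HasFDerivAt (fderiv ℝ u) (fderiv ℝ (fderiv ℝ u) x) x :=
    (hd1.differentiableAt one_ne_zero).hasFDerivAt
  set L0 : (EuclideanSpace ℝ (Fin n) →L[ℝ] ℝ) ≃ₗᵢ[ℝ] EuclideanSpace ℝ (Fin n) :=
    (InnerProductSpace.toDual ℝ _).symm with hL0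
  set L : (EuclideanSpace ℝ (Fin n) →L[ℝ] ℝ) →L[ℝ] EuclideanSpace ℝ (Fin n) :=
    ((L0.toContinuousLinearEquiv :
      (EuclideanSpace ℝ (Fin n) →L[ℝ] ℝ) ≃L[ℝ] EuclideanSpace ℝ (Fin n)) :
      (EuclideanSpace ℝ (Fin n) →L[ℝ] ℝ) →L[ℝ] EuclideanSpace ℝ (Fin n)) with hL
  set H : EuclideanSpace ℝ (Fin n) →L[ℝ] EuclideanSpace ℝ (Fin n) :=
    L.comp (fderiv ℝ (fderiv ℝ u) x) with hH
  have hgfun : gradient u = fun z => L (fderiv ℝ u z) := rfl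
  have hgH : HasFDerivAt (gradient u) H x := by
    rw [hgfun]
    exact L.hasFDerivAt.comp x hB'
  have hfd : fderiv ℝ (gradient u) x = H := hgH.fderiv
  -- symmetry of the Hessian
  have hsym : ∀ v w : EuclideanSpace ℝ (Fin n), ⟪H v, w⟫ = ⟪H w, v⟫ := by
    have h2 := hx2.isSymmSndFDerivAt (by simp [minSmoothness_of_isRCLikeNormedField])
    intro v w
    have hv : ∀ a b : EuclideanSpace ℝ (Fin n), ⟪H a, b⟫ = fderiv ℝ (fderiv ℝ u) x a b := by
      intro a b
      have ha : H a = (InnerProductSpace.toDual ℝ (EuclideanSpace ℝ (Fin n))).symm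
          (fderiv ℝ (fderiv ℝ u) x a) := rfl
      rw [ha, InnerProductSpace.toDual_symm_apply]
    rw [hv, hv, h2 v w]
  -- gradient u x in terms of fderiv
  have hgx : fderiv ℝ u x = (InnerProductSpace.toDual ℝ (EuclideanSpace ℝ (Fin n))) (gradient u x) := by
    simp [gradient]
  -- derivative of each piece
  have h2 : HasFDerivAt (fun z => (⟪gradient u z, gradient u z⟫ : ℝ))
      ((fderivInnerCLM ℝ (gradient u x, gradient u x)).comp (H.prod H)) x :=
    hgH.inner ℝ hgH
  have h3 : HasFDerivAt (fun z : EuclideanSpace ℝ (Fin n) => (⟪z, z⟫ : ℝ))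
      ((fderivInnerCLM ℝ (x, x)).comp ((ContinuousLinearMap.id ℝ (EuclideanSpace ℝ (Fin n))).prod
        (ContinuousLinearMap.id ℝ (EuclideanSpace ℝ (Fin n))))) x :=
    (hasFDerivAt_id x).inner ℝ (hasFDerivAt_id x)
  have h4 : HasFDerivAt (fun z : EuclideanSpace ℝ (Fin n) => (⟪z, gradient u z⟫ : ℝ))
      ((fderivInnerCLM ℝ (x, gradient u x)).comp ((ContinuousLinearMap.id ℝ (EuclideanSpace ℝ (Fin n))).prod H)) x :=
    (hasFDerivAt_id x).inner ℝ hgH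
  have key := (hA.sub ((h2.sub h3).const_mul (Real.sin γ * Real.cos γ / 2))).sub
      (h4.const_mul (Real.sin γ ^ 2))
  have hfun : (fun z => u z - Real.sin γ * Real.cos γ * ((‖gradient u z‖ ^ 2 - ‖z‖ ^ 2) / 2)
          - Real.sin γ ^ 2 * ⟪z, gradient u z⟫)
      = (fun z => u z - Real.sin γ * Real.cos γ / 2 *
          ((⟪gradient u z, gradient u z⟫ : ℝ) - (⟪z, z⟫ : ℝ))
          - Real.sin γ ^ 2 * ⟪z, gradient u z⟫) := by
    funext z
    rw [real_inner_self_eq_norm_sq, real_inner_self_eq_norm_sq]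
    ring
  rw [hasGradientAt_iff_hasFDerivAt, hfun, hfd]
  refine key.congr_fderiv ?_
  apply ContinuousLinearMap.ext
  intro v
  simp only [ContinuousLinearMap.coe_sub', Pi.sub_apply, ContinuousLinearMap.coe_smul',
    Pi.smul_apply, ContinuousLinearMap.coe_comp', Function.comp_apply,
    ContinuousLinearMap.prod_apply, fderivInnerCLM_apply, ContinuousLinearMap.coe_id', id_eq,
    smul_eq_mul, InnerProductSpace.toDual_apply_apply, hgx]
  have hsc : Real.cos γ ^ 2 = 1 - Real.sin γ ^ 2 := by
    have := sin_sq_add_cos_sq γ; linarith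
  have hstar : ∀ c : ℝ, (starRingEnd ℝ) c = c := fun c => rfl
  have e1 : ⟪H v, gradient u x⟫ = ⟪H (gradient u x), v⟫ := hsym v _
  have e2 : ⟪H v, x⟫ = ⟪H x, v⟫ := hsym v _
  simp only [map_add, map_smul, inner_add_left, inner_add_right, inner_smul_left,
    inner_smul_right, hstar, inner_sub_left, smul_eq_mul]
  rw [real_inner_comm (gradient u x) (H v), real_inner_comm (H v) (gradient u x), e1,
    real_inner_comm (H v) x, e2, real_inner_comm x v, real_inner_comm (gradient u x) v]
  linear_combination (-⟪gradient u x, v⟫ : ℝ) * hsc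
end

section
/- Let n ≥ 1, R > 0, K > 0, and let u : B_R → ℝ be differentiable on the open ball B_R ⊆ ℝⁿ with Du K-Lipschitz on B_R. Let γ ∈ (0, π/2) satisfy K·tan γ < 1. Then for all x₁, x₂ ∈ B_R, |sin γ · (x₁ − x₂) + cos γ · (Du(x₁) − Du(x₂))| ≤ ((sin γ + K)/(cos γ − K sin γ)) · |cos γ · (x₁ − x₂) − sin γ · (Du(x₁) − Du(x₂))|. That is, writing x̄(x) = cos γ · x − sin γ · Du(x) and ȳ(x) = sin γ · x + cos γ · Du(x), the map x̄ ↦ ȳ is Lipschitz with constant (sin γ + K)/(cos γ − K sin γ). -/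
open Metric Set Real

/-- If `Du` is the gradient of `u` on `B_R` and is `K`-Lipschitz there, and `γ ∈ (0, π/2)`
satisfies `K tan γ < 1`, then with `x̄(x) = cos γ x - sin γ Du(x)` and
`ȳ(x) = sin γ x + cos γ Du(x)`, the map `x̄ ↦ ȳ` is Lipschitz with constant
`(sin γ + K)/(cos γ - K sin γ)`. -/
theorem upward_rotation_lipschitz_bound
    (n : ℕ) (hn : 1 ≤ n) (R K : ℝ) (hR : 0 < R) (hK : 0 < K)
    (u : EuclideanSpace ℝ (Fin n) → ℝ)
    (Du : EuclideanSpace ℝ (Fin n) → EuclideanSpace ℝ (Fin n))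
    (hdiff : ∀ x ∈ Metric.ball (0 : EuclideanSpace ℝ (Fin n)) R, HasGradientAt u (Du x) x)
    (hLip : ∀ x₁ ∈ Metric.ball (0 : EuclideanSpace ℝ (Fin n)) R,
      ∀ x₂ ∈ Metric.ball (0 : EuclideanSpace ℝ (Fin n)) R,
        ‖Du x₁ - Du x₂‖ ≤ K * ‖x₁ - x₂‖)
    (γ : ℝ) (hγ0 : 0 < γ) (hγ1 : γ < π / 2) (hγK : K * Real.tan γ < 1) :
    ∀ x₁ ∈ Metric.ball (0 : EuclideanSpace ℝ (Fin n)) R,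
      ∀ x₂ ∈ Metric.ball (0 : EuclideanSpace ℝ (Fin n)) R,
        ‖Real.sin γ • (x₁ - x₂) + Real.cos γ • (Du x₁ - Du x₂)‖ ≤
          ((Real.sin γ + K) / (Real.cos γ - K * Real.sin γ)) *
            ‖Real.cos γ • (x₁ - x₂) - Real.sin γ • (Du x₁ - Du x₂)‖ := by
  intro x₁ hx₁ x₂ hx₂
  set a := x₁ - x₂
  set b := Du x₁ - Du x₂
  have hcos : 0 < Real.cos γ := Real.cos_pos_of_mem_Ioo ⟨by linarith [Real.pi_pos], hγ1⟩
  have hsin : 0 < Real.sin γ := Real.sin_pos_of_pos_of_lt_pi hγ0 (by linarith [Real.pi_pos])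
  have htan : Real.tan γ = Real.sin γ / Real.cos γ := Real.tan_eq_sin_div_cos γ
  have hZ : 0 < Real.cos γ - K * Real.sin γ := by
    have : K * Real.sin γ < Real.cos γ := by
      rw [htan] at hγK
      calc K * Real.sin γ = (K * (Real.sin γ / Real.cos γ)) * Real.cos γ := by
            field_simp
        _ < 1 * Real.cos γ := by
            exact mul_lt_mul_of_pos_right hγK hcos
        _ = Real.cos γ := one_mul _
    linarith
  have hb : ‖b‖ ≤ K * ‖a‖ := hLip x₁ hx₁ x₂ hx₂
  have ha0 : 0 ≤ ‖a‖ := norm_nonneg _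
  -- lower bound for RHS norm
  have hW : (Real.cos γ - K * Real.sin γ) * ‖a‖ ≤ ‖Real.cos γ • a - Real.sin γ • b‖ := by
    have h1 : ‖Real.cos γ • a‖ - ‖Real.sin γ • b‖ ≤ ‖Real.cos γ • a - Real.sin γ • b‖ :=
      norm_sub_norm_le _ _
    have h2 : ‖Real.cos γ • a‖ = Real.cos γ * ‖a‖ := by
      rw [norm_smul, Real.norm_eq_abs, abs_of_pos hcos]
    have h3 : ‖Real.sin γ • b‖ ≤ Real.sin γ * (K * ‖a‖) := by
      rw [norm_smul, Real.norm_eq_abs, abs_of_pos hsin]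
      exact mul_le_mul_of_nonneg_left hb hsin.le
    nlinarith [mul_nonneg hK.le ha0]
  -- upper bound for LHS norm
  have hX : ‖Real.sin γ • a + Real.cos γ • b‖ ≤ (Real.sin γ + K) * ‖a‖ := by
    have h1 : ‖Real.sin γ • a + Real.cos γ • b‖ ≤ ‖Real.sin γ • a‖ + ‖Real.cos γ • b‖ :=
      norm_add_le _ _
    have h2 : ‖Real.sin γ • a‖ = Real.sin γ * ‖a‖ := by
      rw [norm_smul, Real.norm_eq_abs, abs_of_pos hsin]
    have h3 : ‖Real.cos γ • b‖ ≤ Real.cos γ * (K * ‖a‖) := by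
      rw [norm_smul, Real.norm_eq_abs, abs_of_pos hcos]
      exact mul_le_mul_of_nonneg_left hb hcos.le
    have hcos1 : Real.cos γ ≤ 1 := Real.cos_le_one γ
    nlinarith [mul_nonneg hK.le ha0]
  calc ‖Real.sin γ • a + Real.cos γ • b‖ ≤ (Real.sin γ + K) * ‖a‖ := hX
    _ = ((Real.sin γ + K) / (Real.cos γ - K * Real.sin γ)) *
          ((Real.cos γ - K * Real.sin γ) * ‖a‖) := by rw [← mul_assoc, div_mul_cancel₀ _ hZ.ne']
    _ ≤ ((Real.sin γ + K) / (Real.cos γ - K * Real.sin γ)) *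
          ‖Real.cos γ • a - Real.sin γ • b‖ := by
        apply mul_le_mul_of_nonneg_left hW
        positivity
end

section
/- Let n ≥ 1, R > 0, K > 0, and let u : B_R → ℝ be differentiable on the open ball B_R ⊆ ℝⁿ with Du K-Lipschitz on B_R (so u is C^{1,1}). Let γ ∈ (0, π/2) satisfy K·tan γ < 1, and set Φ(x) = cos γ · x − sin γ · Du(x). Then: (i) Φ is injective on B_R and its image Ω̄ = Φ(B_R) is open in ℝⁿ; (ii) the function ū : Ω̄ → ℝ defined by ū(Φ(x)) = u(x) − sin γ cos γ · (|Du(x)|² − |x|²)/2 − sin²γ · ⟨x, Du(x)⟩ is differentiable on Ω̄ with Dū(Φ(x)) = sin γ · x + cos γ · Du(x) for every x ∈ B_R; and (iii) Dū is Lipschitz on Ω̄ with Lipschitz constant at most (sin γ + K)/(cos γ − K sin γ). In other words, the Lagrangian submanifold L_u = {(x, Du(x)) : x ∈ B_R}, after the upward rotation by angle γ, is the gradient graph {(x̄, Dū(x̄)) : x̄ ∈ Ω̄} of a potential ū whose gradient is Lipschitz. -/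
open Metric Set Real
open scoped RealInnerProductSpace
open Asymptotics Filter
open scoped NNReal Topology

lemma key_identity {E : Type*} [NormedAddCommGroup E] [InnerProductSpace ℝ E]
    (s c : ℝ) (hsc : s ^ 2 + c ^ 2 = 1) (a b D D₀ : E) (ua ub : ℝ) :
    (ua - s * c * ((‖D‖ ^ 2 - ‖a‖ ^ 2) / 2) - s ^ 2 * ⟪a, D⟫)
      - (ub - s * c * ((‖D₀‖ ^ 2 - ‖b‖ ^ 2) / 2) - s ^ 2 * ⟪b, D₀⟫)
      - ⟪s • b + c • D₀, (c • a - s • D) - (c • b - s • D₀)⟫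
    = (ua - ub - ⟪D₀, a - b⟫)
      + (-(s * c / 2) * ‖D - D₀‖ ^ 2 + (s * c / 2) * ‖a - b‖ ^ 2
        - s ^ 2 * ⟪a - b, D - D₀⟫) := by
  simp only [@norm_sub_sq_real, inner_sub_left, inner_sub_right, inner_add_left,
    real_inner_smul_left, real_inner_smul_right, real_inner_self_eq_norm_sq,
    real_inner_comm D a, real_inner_comm D₀ a, real_inner_comm D₀ b,
    real_inner_comm D b, real_inner_comm D₀ D, real_inner_comm b a]
  linear_combination (⟪a, D₀⟫ - ⟪b, D₀⟫ - ua + ub) * hsc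
    + (ua - ub + ⟪D₀,b⟫ + ⟪b,D₀⟫ - ⟪D₀,a⟫ - ⟪a,D₀⟫) * hsc

/-- Upward rotation of a `C^{1,1}` gradient graph. If `Du` is the gradient of `u` on `B_R`,
`K`-Lipschitz there, and `γ ∈ (0, π/2)` satisfies `K tan γ < 1`, then with
`Φ(x) = cos γ x - sin γ Du(x)`: (i) `Φ` is injective on `B_R` with open image;
(ii) there is `ū` on the image with `ū(Φ(x))` given by the rotated potential formula and
gradient `Dū(Φ(x)) = sin γ x + cos γ Du(x)`; (iii) `Dū` is Lipschitz on the image with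
constant at most `(sin γ + K)/(cos γ - K sin γ)`. -/
theorem upward_rotation_gradient_graph
    (n : ℕ) (hn : 1 ≤ n) (R K : ℝ) (hR : 0 < R) (hK : 0 < K)
    (u : EuclideanSpace ℝ (Fin n) → ℝ)
    (Du : EuclideanSpace ℝ (Fin n) → EuclideanSpace ℝ (Fin n))
    (hdiff : ∀ x ∈ Metric.ball (0 : EuclideanSpace ℝ (Fin n)) R, HasGradientAt u (Du x) x)
    (hLip : ∀ x₁ ∈ Metric.ball (0 : EuclideanSpace ℝ (Fin n)) R,
      ∀ x₂ ∈ Metric.ball (0 : EuclideanSpace ℝ (Fin n)) R,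
        ‖Du x₁ - Du x₂‖ ≤ K * ‖x₁ - x₂‖)
    (γ : ℝ) (hγ0 : 0 < γ) (hγ1 : γ < π / 2) (hγK : K * Real.tan γ < 1)
    (Φ : EuclideanSpace ℝ (Fin n) → EuclideanSpace ℝ (Fin n))
    (hΦ : ∀ x, Φ x = Real.cos γ • x - Real.sin γ • Du x) :
    Set.InjOn Φ (Metric.ball (0 : EuclideanSpace ℝ (Fin n)) R) ∧
    IsOpen (Φ '' Metric.ball (0 : EuclideanSpace ℝ (Fin n)) R) ∧
    ∃ ubar : EuclideanSpace ℝ (Fin n) → ℝ,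
      (∀ x ∈ Metric.ball (0 : EuclideanSpace ℝ (Fin n)) R,
        ubar (Φ x) = u x - Real.sin γ * Real.cos γ * ((‖Du x‖ ^ 2 - ‖x‖ ^ 2) / 2)
          - Real.sin γ ^ 2 * ⟪x, Du x⟫) ∧
      (∀ x ∈ Metric.ball (0 : EuclideanSpace ℝ (Fin n)) R,
        HasGradientAt ubar (Real.sin γ • x + Real.cos γ • Du x) (Φ x)) ∧
      (∀ x₁ ∈ Metric.ball (0 : EuclideanSpace ℝ (Fin n)) R,
        ∀ x₂ ∈ Metric.ball (0 : EuclideanSpace ℝ (Fin n)) R,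
          ‖(Real.sin γ • x₁ + Real.cos γ • Du x₁) - (Real.sin γ • x₂ + Real.cos γ • Du x₂)‖ ≤
            ((Real.sin γ + K) / (Real.cos γ - K * Real.sin γ)) * ‖Φ x₁ - Φ x₂‖) := by
  classical
  have hs0 : 0 < Real.sin γ := Real.sin_pos_of_pos_of_lt_pi hγ0 (by linarith [Real.pi_pos])
  have hc0 : 0 < Real.cos γ := Real.cos_pos_of_mem_Ioo ⟨by linarith [Real.pi_pos], hγ1⟩
  have hs1 : Real.sin γ ≤ 1 := Real.sin_le_one γ
  have hc1 : Real.cos γ ≤ 1 := Real.cos_le_one γ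
  have hKs : K * Real.sin γ < Real.cos γ := by
    have h := hγK
    rw [Real.tan_eq_sin_div_cos, mul_div_assoc'] at h
    exact (div_lt_one hc0).1 h
  have hc0pos : 0 < Real.cos γ - K * Real.sin γ := by linarith
  have hsub : ∀ x₁ x₂, Φ x₁ - Φ x₂
      = Real.cos γ • (x₁ - x₂) - Real.sin γ • (Du x₁ - Du x₂) := by
    intro x₁ x₂; rw [hΦ, hΦ]; simp only [smul_sub]; abel
  -- lower bi-Lipschitz bound
  have hlow : ∀ x₁ ∈ ball (0 : EuclideanSpace ℝ (Fin n)) R,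
      ∀ x₂ ∈ ball (0 : EuclideanSpace ℝ (Fin n)) R,
      (Real.cos γ - K * Real.sin γ) * ‖x₁ - x₂‖ ≤ ‖Φ x₁ - Φ x₂‖ := by
    intro x₁ h₁ x₂ h₂
    have hL := hLip x₁ h₁ x₂ h₂
    have h1 : ‖Real.cos γ • (x₁ - x₂)‖ - ‖Real.sin γ • (Du x₁ - Du x₂)‖
        ≤ ‖Real.cos γ • (x₁ - x₂) - Real.sin γ • (Du x₁ - Du x₂)‖ :=
      norm_sub_norm_le _ _
    rw [norm_smul, norm_smul, Real.norm_eq_abs, Real.norm_eq_abs,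
      abs_of_pos hc0, abs_of_pos hs0] at h1
    have h2 := mul_le_mul_of_nonneg_left hL hs0.le
    rw [hsub]
    nlinarith [norm_nonneg (x₁ - x₂)]
  haveI : Nontrivial (EuclideanSpace ℝ (Fin n)) := by
    refine nontrivial_of_ne (EuclideanSpace.single ⟨0, hn⟩ (1 : ℝ)) 0 ?_
    intro h
    have := congrArg (fun v : EuclideanSpace ℝ (Fin n) => v ⟨0, hn⟩) h
    simp [EuclideanSpace.single_apply] at this
  obtain ⟨A, hAapp⟩ : ∃ A : EuclideanSpace ℝ (Fin n) ≃L[ℝ] EuclideanSpace ℝ (Fin n),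
      ∀ z, A z = Real.cos γ • z :=
    ⟨(LinearEquiv.smulOfNeZero ℝ _ (Real.cos γ) hc0.ne').toContinuousLinearEquiv,
      fun z => rfl⟩
  have hAsymm : ∀ z : EuclideanSpace ℝ (Fin n), A.symm z = (Real.cos γ)⁻¹ • z := fun z => by
    rw [ContinuousLinearEquiv.symm_apply_eq, hAapp, smul_smul,
      mul_inv_cancel₀ hc0.ne', one_smul]
  set cnn : ℝ≥0 := (K * Real.sin γ).toNNReal with hcnn
  have hcnnR : (cnn : ℝ) = K * Real.sin γ := Real.coe_toNNReal _ (by positivity)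
  have happrox : ApproximatesLinearOn Φ
      (A : EuclideanSpace ℝ (Fin n) →L[ℝ] EuclideanSpace ℝ (Fin n)) (ball 0 R) cnn := by
    intro x hx y hy
    have hL := hLip x hx y hy
    have heq : Φ x - Φ y - (A : EuclideanSpace ℝ (Fin n) →L[ℝ] EuclideanSpace ℝ (Fin n)) (x - y)
        = -(Real.sin γ • (Du x - Du y)) := by
      have h3 : (A : EuclideanSpace ℝ (Fin n) →L[ℝ] EuclideanSpace ℝ (Fin n)) (x - y)
          = Real.cos γ • (x - y) := hAapp _
      rw [h3, hsub]; abel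
    rw [heq, norm_neg, norm_smul, Real.norm_eq_abs, abs_of_pos hs0]
    calc Real.sin γ * ‖Du x - Du y‖ ≤ Real.sin γ * (K * ‖x - y‖) :=
          mul_le_mul_of_nonneg_left hL hs0.le
      _ = (cnn : ℝ) * ‖x - y‖ := by rw [hcnnR]; ring
  have hNorm : ‖(A.symm : EuclideanSpace ℝ (Fin n) →L[ℝ] EuclideanSpace ℝ (Fin n))‖
      = (Real.cos γ)⁻¹ := by
    have h4 : (A.symm : EuclideanSpace ℝ (Fin n) →L[ℝ] EuclideanSpace ℝ (Fin n))
        = (Real.cos γ)⁻¹ • ContinuousLinearMap.id ℝ (EuclideanSpace ℝ (Fin n)) := by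
      ext z; simp [hAsymm z]
    rw [h4]
    have hz : ‖EuclideanSpace.single (⟨0, hn⟩ : Fin n) (1 : ℝ)‖ = 1 := by
      rw [EuclideanSpace.norm_single]; norm_num
    refine le_antisymm ?_ ?_
    · calc ‖(Real.cos γ)⁻¹ • ContinuousLinearMap.id ℝ (EuclideanSpace ℝ (Fin n))‖
          ≤ ‖(Real.cos γ)⁻¹‖ * ‖ContinuousLinearMap.id ℝ (EuclideanSpace ℝ (Fin n))‖ :=
            ContinuousLinearMap.opNorm_smul_le _ _
        _ = (Real.cos γ)⁻¹ := by
            rw [ContinuousLinearMap.norm_id, Real.norm_eq_abs, abs_of_pos (by positivity), mul_one]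
    · have h5 := ContinuousLinearMap.unit_le_opNorm
        ((Real.cos γ)⁻¹ • ContinuousLinearMap.id ℝ (EuclideanSpace ℝ (Fin n)))
        (EuclideanSpace.single (⟨0, hn⟩ : Fin n) (1 : ℝ)) (le_of_eq hz)
      have h6 : ‖((Real.cos γ)⁻¹ • ContinuousLinearMap.id ℝ (EuclideanSpace ℝ (Fin n)))
          (EuclideanSpace.single (⟨0, hn⟩ : Fin n) (1 : ℝ))‖ = (Real.cos γ)⁻¹ := by
        simp only [ContinuousLinearMap.smul_apply, ContinuousLinearMap.id_apply, norm_smul,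
          Real.norm_eq_abs, abs_of_pos (show (0:ℝ) < (Real.cos γ)⁻¹ by positivity), hz, mul_one]
      rwa [h6] at h5
  have hcN : Subsingleton (EuclideanSpace ℝ (Fin n)) ∨
      cnn < ‖(A.symm : EuclideanSpace ℝ (Fin n) →L[ℝ] EuclideanSpace ℝ (Fin n))‖₊⁻¹ := by
    right
    rw [← NNReal.coe_lt_coe, NNReal.coe_inv, coe_nnnorm, hNorm, inv_inv]
    rw [hcnnR]; exact hKs
  let Ψ := happrox.toOpenPartialHomeomorph Φ (ball 0 R) hcN isOpen_ball
  have hΨcoe : ∀ z, Ψ z = Φ z := fun _ => rfl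
  have hΨsource : Ψ.source = ball (0 : EuclideanSpace ℝ (Fin n)) R := rfl
  have hΨtarget : Ψ.target = Φ '' ball (0 : EuclideanSpace ℝ (Fin n)) R := rfl
  have hinj : Set.InjOn Φ (ball (0 : EuclideanSpace ℝ (Fin n)) R) := happrox.injOn hcN
  have hopen : IsOpen (Φ '' ball (0 : EuclideanSpace ℝ (Fin n)) R) := by
    rw [← hΨtarget]; exact Ψ.open_target
  refine ⟨hinj, hopen, ?_⟩
  set G : EuclideanSpace ℝ (Fin n) → ℝ := fun x =>
    u x - Real.sin γ * Real.cos γ * ((‖Du x‖ ^ 2 - ‖x‖ ^ 2) / 2)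
      - Real.sin γ ^ 2 * ⟪x, Du x⟫ with hG
  have hleft : ∀ x ∈ ball (0 : EuclideanSpace ℝ (Fin n)) R, Ψ.symm (Φ x) = x := by
    intro x hx
    have : Ψ.symm (Ψ x) = x := Ψ.left_inv (by rw [hΨsource]; exact hx)
    rwa [hΨcoe] at this
  refine ⟨fun y => G (Ψ.symm y), fun x hx => ?_, ?_, ?_⟩
  · show G (Ψ.symm (Φ x)) = _
    rw [hleft x hx]
  · -- gradient
    intro x₀ hx₀
    have hmem : Φ '' ball (0 : EuclideanSpace ℝ (Fin n)) R ∈ 𝓝 (Φ x₀) :=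
      hopen.mem_nhds ⟨x₀, hx₀, rfl⟩
    have hψΦ : Ψ.symm (Φ x₀) = x₀ := hleft x₀ hx₀
    have hcontψ : ContinuousAt Ψ.symm (Φ x₀) :=
      Ψ.continuousOn_symm.continuousAt (by rw [hΨtarget]; exact hmem)
    have htend : Tendsto Ψ.symm (𝓝 (Φ x₀)) (𝓝 x₀) := by
      have := hcontψ.tendsto
      rwa [hψΦ] at this
    rw [hasGradientAt_iff_isLittleO]
    have hu := hasGradientAt_iff_isLittleO.1 (hdiff x₀ hx₀)
    have hsq : (fun x => ‖x - x₀‖ ^ 2) =o[𝓝 x₀]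
        fun x : EuclideanSpace ℝ (Fin n) => x - x₀ := by
      rw [isLittleO_iff]
      intro ε hε
      filter_upwards [Metric.ball_mem_nhds x₀ hε] with x hx
      rw [mem_ball, dist_eq_norm] at hx
      have h0 := norm_nonneg (x - x₀)
      have h1 : ‖‖x - x₀‖ ^ 2‖ = ‖x - x₀‖ ^ 2 := by
        rw [Real.norm_eq_abs, abs_of_nonneg (by positivity)]
      rw [h1]
      nlinarith only [mul_le_mul_of_nonneg_right hx.le h0, h0]
    have hEbig : (fun x => -(Real.sin γ * Real.cos γ / 2) * ‖Du x - Du x₀‖ ^ 2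
        + (Real.sin γ * Real.cos γ / 2) * ‖x - x₀‖ ^ 2
        - Real.sin γ ^ 2 * ⟪x - x₀, Du x - Du x₀⟫) =O[𝓝 x₀]
        fun x => ‖x - x₀‖ ^ 2 := by
      rw [isBigO_iff]
      refine ⟨Real.sin γ * Real.cos γ / 2 * K ^ 2 + Real.sin γ * Real.cos γ / 2
        + Real.sin γ ^ 2 * K, ?_⟩
      filter_upwards [isOpen_ball.mem_nhds hx₀] with x hx
      have hL := hLip x hx x₀ hx₀
      have hcs := abs_real_inner_le_norm (x - x₀) (Du x - Du x₀)
      have hb0 := norm_nonneg (x - x₀)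
      have ha0 := norm_nonneg (Du x - Du x₀)
      have hKb : 0 ≤ K * ‖x - x₀‖ := le_trans ha0 hL
      have hD2 : ‖Du x - Du x₀‖ ^ 2 ≤ K ^ 2 * ‖x - x₀‖ ^ 2 := by
        nlinarith only [mul_le_mul hL hL ha0 hKb]
      have hip1 : ⟪x - x₀, Du x - Du x₀⟫ ≤ K * ‖x - x₀‖ ^ 2 := by
        nlinarith only [le_abs_self ⟪x - x₀, Du x - Du x₀⟫, hcs,
          mul_le_mul_of_nonneg_right hL hb0]
      have hip2 : -(K * ‖x - x₀‖ ^ 2) ≤ ⟪x - x₀, Du x - Du x₀⟫ := by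
        nlinarith only [neg_abs_le ⟪x - x₀, Du x - Du x₀⟫, hcs,
          mul_le_mul_of_nonneg_right hL hb0]
      have h1 : ‖‖x - x₀‖ ^ 2‖ = ‖x - x₀‖ ^ 2 := by
        rw [Real.norm_eq_abs, abs_of_nonneg (by positivity)]
      rw [Real.norm_eq_abs, h1, abs_le]
      have e0 : (0:ℝ) ≤ Real.sin γ * Real.cos γ / 2 := by positivity
      have e1 : 0 ≤ Real.sin γ * Real.cos γ / 2 * ‖Du x - Du x₀‖ ^ 2 := by positivity
      have e2 : 0 ≤ Real.sin γ * Real.cos γ / 2 * ‖x - x₀‖ ^ 2 := by positivity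
      have e3 : 0 ≤ Real.sin γ * Real.cos γ / 2 * (K ^ 2 * ‖x - x₀‖ ^ 2) := by positivity
      have e4 := mul_le_mul_of_nonneg_left hip1 (sq_nonneg (Real.sin γ))
      have e5 := mul_le_mul_of_nonneg_left hip2 (sq_nonneg (Real.sin γ))
      have e6 := mul_le_mul_of_nonneg_left hD2 e0
      constructor
      · nlinarith only [e1, e2, e3, e4, e5, e6]
      · nlinarith only [e1, e2, e3, e4, e5, e6]
    have hB := hEbig.trans_isLittleO hsq
    have hkey : ∀ x, G x - G x₀
        - ⟪Real.sin γ • x₀ + Real.cos γ • Du x₀, Φ x - Φ x₀⟫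
        = (u x - u x₀ - ⟪Du x₀, x - x₀⟫)
          + (-(Real.sin γ * Real.cos γ / 2) * ‖Du x - Du x₀‖ ^ 2
            + (Real.sin γ * Real.cos γ / 2) * ‖x - x₀‖ ^ 2
            - Real.sin γ ^ 2 * ⟪x - x₀, Du x - Du x₀⟫) := by
      intro x
      rw [hΦ x, hΦ x₀]
      exact key_identity (Real.sin γ) (Real.cos γ) (Real.sin_sq_add_cos_sq γ)
        x x₀ (Du x) (Du x₀) (u x) (u x₀)
    have h1 : (fun x => G x - G x₀
        - ⟪Real.sin γ • x₀ + Real.cos γ • Du x₀, Φ x - Φ x₀⟫) =o[𝓝 x₀]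
        fun x => x - x₀ :=
      (hu.add hB).congr' (Filter.Eventually.of_forall fun x => (hkey x).symm) EventuallyEq.rfl
    have h2 := h1.comp_tendsto htend
    have h3 : (fun y => Ψ.symm y - x₀) =O[𝓝 (Φ x₀)] fun y => y - Φ x₀ := by
      rw [isBigO_iff]
      refine ⟨(Real.cos γ - K * Real.sin γ)⁻¹, ?_⟩
      filter_upwards [hmem] with y hy
      have hyt : y ∈ Ψ.target := by rw [hΨtarget]; exact hy
      have hys : Ψ.symm y ∈ ball (0 : EuclideanSpace ℝ (Fin n)) R := by
        have := Ψ.map_target hyt; rwa [hΨsource] at this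
      have hry : Φ (Ψ.symm y) = y := by
        have := Ψ.right_inv hyt; rwa [hΨcoe] at this
      have hl := hlow (Ψ.symm y) hys x₀ hx₀
      rw [hry] at hl
      rw [inv_mul_eq_div, le_div_iff₀ hc0pos]
      calc ‖Ψ.symm y - x₀‖ * (Real.cos γ - K * Real.sin γ)
          = (Real.cos γ - K * Real.sin γ) * ‖Ψ.symm y - x₀‖ := by ring
        _ ≤ ‖y - Φ x₀‖ := hl
    have h4 := h2.trans_isBigO h3
    refine h4.congr' ?_ EventuallyEq.rfl
    filter_upwards [hmem] with y hy
    have hyt : y ∈ Ψ.target := by rw [hΨtarget]; exact hy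
    have hry : Φ (Ψ.symm y) = y := by
      have := Ψ.right_inv hyt; rwa [hΨcoe] at this
    show G (Ψ.symm y) - G x₀
        - ⟪Real.sin γ • x₀ + Real.cos γ • Du x₀, Φ (Ψ.symm y) - Φ x₀⟫
      = G (Ψ.symm y) - G (Ψ.symm (Φ x₀))
        - ⟪Real.sin γ • x₀ + Real.cos γ • Du x₀, y - Φ x₀⟫
    rw [hψΦ, hry]
  · -- Lipschitz bound
    intro x₁ h₁ x₂ h₂
    have hlow' := hlow x₁ h₁ x₂ h₂
    have hL := hLip x₁ h₁ x₂ h₂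
    have heq : (Real.sin γ • x₁ + Real.cos γ • Du x₁)
        - (Real.sin γ • x₂ + Real.cos γ • Du x₂)
        = Real.sin γ • (x₁ - x₂) + Real.cos γ • (Du x₁ - Du x₂) := by
      simp only [smul_sub]; abel
    have hup : ‖(Real.sin γ • x₁ + Real.cos γ • Du x₁)
        - (Real.sin γ • x₂ + Real.cos γ • Du x₂)‖ ≤ (Real.sin γ + K) * ‖x₁ - x₂‖ := by
      rw [heq]
      calc ‖Real.sin γ • (x₁ - x₂) + Real.cos γ • (Du x₁ - Du x₂)‖
          ≤ ‖Real.sin γ • (x₁ - x₂)‖ + ‖Real.cos γ • (Du x₁ - Du x₂)‖ := norm_add_le _ _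
        _ = Real.sin γ * ‖x₁ - x₂‖ + Real.cos γ * ‖Du x₁ - Du x₂‖ := by
            rw [norm_smul, norm_smul, Real.norm_eq_abs, Real.norm_eq_abs,
              abs_of_pos hs0, abs_of_pos hc0]
        _ ≤ (Real.sin γ + K) * ‖x₁ - x₂‖ := by
            have f1 := mul_le_mul_of_nonneg_left hL hc0.le
            have f2 : Real.cos γ * (K * ‖x₁ - x₂‖) ≤ 1 * (K * ‖x₁ - x₂‖) :=
              mul_le_mul_of_nonneg_right hc1
                (mul_nonneg hK.le (norm_nonneg _))
            nlinarith only [f1, f2]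
    calc ‖(Real.sin γ • x₁ + Real.cos γ • Du x₁)
        - (Real.sin γ • x₂ + Real.cos γ • Du x₂)‖
        ≤ (Real.sin γ + K) * ‖x₁ - x₂‖ := hup
      _ = (Real.sin γ + K) / (Real.cos γ - K * Real.sin γ)
          * ((Real.cos γ - K * Real.sin γ) * ‖x₁ - x₂‖) := by
          rw [← mul_assoc, div_mul_cancel₀ _ hc0pos.ne']
      _ ≤ (Real.sin γ + K) / (Real.cos γ - K * Real.sin γ) * ‖Φ x₁ - Φ x₂‖ := by
          apply mul_le_mul_of_nonneg_left hlow'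
          exact div_nonneg (by linarith) hc0pos.le
end
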